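/- Assume packet losses are i.i.d. Bernoulli with parameter p and N ≥ 1. For any fixed media packet k ∈ B, the probability that packet k is lost in the network and is unrecoverable, namely Σ over all subsets S of Fin (N+K) with k ∈ S and |S| > K of p^|S| · (1-p)^{N+K-|S|}, equals (Σ_{i=1}^{N} i · Q(i)) / N. -/
import Mathlib

open Finset


/-- The media block `B`: the first `N` of the `N + K` packet indices. -/
def mediaB (N K : ℕ) : Finset (Fin (N + K)) :=
  Finset.univ.filter (fun i => (i : ℕ) < N)

/-- `U(S)`: the number of unrecoverable losses among the media packets when the set
of packets lost in the network is `S`. Erasure coding recovers everything iff at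
most `K` packets are lost. -/
def unrec (N K : ℕ) (S : Finset (Fin (N + K))) : ℕ :=
  if K < S.card then (S ∩ mediaB N K).card else 0

/-- `Q m`: the probability (under i.i.d. Bernoulli(p) network losses) that exactly
`m` unrecoverable losses remain in the block. -/
noncomputable def Q (N K : ℕ) (p : ℝ) (m : ℕ) : ℝ :=
  ∑ S ∈ Finset.univ.filter (fun S : Finset (Fin (N + K)) => unrec N K S = m),
    p ^ S.card * (1 - p) ^ (N + K - S.card)

lemma card_mediaB (N K : ℕ) : (mediaB N K).card = N := by
  have : mediaB N K = (Finset.univ : Finset (Fin N)).map (Fin.castAddEmb K) := by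
    ext i
    simp [mediaB, Fin.castAddEmb]
    constructor
    · intro h; exact ⟨⟨i, h⟩, rfl⟩
    · rintro ⟨a, rfl⟩; exact a.2
  simp [this]

lemma sym_lem (N K : ℕ) (p : ℝ) (j k : Fin (N + K)) :
    ∑ S ∈ Finset.univ.filter (fun S : Finset (Fin (N + K)) => j ∈ S ∧ K < S.card),
      p ^ S.card * (1 - p) ^ (N + K - S.card)
    = ∑ S ∈ Finset.univ.filter (fun S : Finset (Fin (N + K)) => k ∈ S ∧ K < S.card),
      p ^ S.card * (1 - p) ^ (N + K - S.card) := by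
  apply Finset.sum_nbij' (fun S => S.map (Equiv.swap j k).toEmbedding)
    (fun S => S.map (Equiv.swap j k).toEmbedding)
  · intro S hS
    simp only [mem_filter, mem_univ, true_and] at hS ⊢
    refine ⟨?_, by simp [hS.2]⟩
    simp only [Finset.mem_map, Equiv.coe_toEmbedding]
    exact ⟨j, hS.1, Equiv.swap_apply_left j k⟩
  · intro S hS
    simp only [mem_filter, mem_univ, true_and] at hS ⊢
    refine ⟨?_, by simp [hS.2]⟩
    simp only [Finset.mem_map, Equiv.coe_toEmbedding]
    exact ⟨k, hS.1, Equiv.swap_apply_right j k⟩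
  · intro S _
    ext x
    simp [Equiv.swap_apply_self]
  · intro S _
    ext x
    simp [Equiv.swap_apply_self]
  · intro S _
    simp

theorem stmt_3 (N K : ℕ) (p : ℝ) (hp0 : 0 ≤ p) (hp1 : p ≤ 1) (hN : 1 ≤ N)
    (k : Fin (N + K)) (hk : k ∈ mediaB N K) :
    ∑ S ∈ Finset.univ.filter (fun S : Finset (Fin (N + K)) => k ∈ S ∧ K < S.card),
      p ^ S.card * (1 - p) ^ (N + K - S.card)
    = (∑ i ∈ Finset.Icc 1 N, (i : ℝ) * Q N K p i) / N := by
  set w : Finset (Fin (N + K)) → ℝ := fun S => p ^ S.card * (1 - p) ^ (N + K - S.card) with hw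
  have hnum : ∑ i ∈ Finset.Icc 1 N, (i : ℝ) * Q N K p i
      = ∑ S : Finset (Fin (N + K)), (unrec N K S : ℝ) * w S := by
    have h1 : ∀ i ∈ Finset.Icc 1 N, (i : ℝ) * Q N K p i
        = ∑ S ∈ Finset.univ.filter (fun S : Finset (Fin (N + K)) => unrec N K S = i),
            (unrec N K S : ℝ) * w S := by
      intro i _
      rw [Q, Finset.mul_sum]
      apply Finset.sum_congr rfl
      intro S hS
      simp only [mem_filter] at hS
      rw [hS.2]
    rw [Finset.sum_congr rfl h1]
    rw [Finset.sum_fiberwise_eq_sum_filter Finset.univ (Finset.Icc 1 N)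
      (fun S => unrec N K S) (fun S => (unrec N K S : ℝ) * w S)]
    apply Finset.sum_subset (Finset.filter_subset _ _)
    intro S _ hS
    simp only [mem_filter, mem_univ, true_and, Finset.mem_Icc] at hS
    have : unrec N K S = 0 := by
      by_contra h
      apply hS
      constructor
      · omega
      · calc unrec N K S ≤ (S ∩ mediaB N K).card := by
              unfold unrec; split <;> omega
          _ ≤ (mediaB N K).card := Finset.card_le_card (Finset.inter_subset_right)
          _ = N := card_mediaB N K
    simp [this]
  have hsplit : ∀ S : Finset (Fin (N + K)), (unrec N K S : ℝ) * w S
      = ∑ j ∈ mediaB N K, if j ∈ S ∧ K < S.card then w S else 0 := by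
    intro S
    by_cases h : K < S.card
    · have : (unrec N K S : ℝ) = ∑ j ∈ mediaB N K, if j ∈ S then (1:ℝ) else 0 := by
        rw [unrec, if_pos h]
        rw [Finset.sum_ite_mem]
        rw [Finset.inter_comm]
        simp
      rw [this, Finset.sum_mul]
      apply Finset.sum_congr rfl
      intro j _
      by_cases hj : j ∈ S <;> simp [hj, h]
    · simp only [unrec, if_neg h]
      simp [h]
  have h2 : ∑ S : Finset (Fin (N + K)), (unrec N K S : ℝ) * w S
      = ∑ j ∈ mediaB N K,
          ∑ S ∈ Finset.univ.filter (fun S : Finset (Fin (N + K)) => j ∈ S ∧ K < S.card), w S := by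
    rw [Finset.sum_congr rfl (fun S _ => hsplit S), Finset.sum_comm]
    apply Finset.sum_congr rfl
    intro j _
    exact (Finset.sum_filter _ _).symm
  have h3 : ∀ j ∈ mediaB N K,
      (∑ S ∈ Finset.univ.filter (fun S : Finset (Fin (N + K)) => j ∈ S ∧ K < S.card), w S)
      = ∑ S ∈ Finset.univ.filter (fun S : Finset (Fin (N + K)) => k ∈ S ∧ K < S.card), w S := by
    intro j _
    exact sym_lem N K p j k
  rw [hnum, h2, Finset.sum_congr rfl h3, Finset.sum_const, card_mediaB, nsmul_eq_mul]
  have hN0 : (N : ℝ) ≠ 0 := by positivity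
  field_simp
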